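/- Let A be a nonzero real symmetric matrix. Every best rank one approximation of A (in Frobenius norm, over all rank one matrices s x yᵀ) is symmetric if and only if λ₁(A) ≠ −λₙ(A). -/

import Mathlib

noncomputable section

/-- Frobenius norm of a real matrix. -/
def frob {m k : ℕ} (A : Matrix (Fin m) (Fin k) ℝ) : ℝ :=
  Real.sqrt (∑ i, ∑ j, A i j ^ 2)

/-- `v` is a unit vector. -/
def uvec {m : ℕ} (v : Fin m → ℝ) : Prop := ∑ i, v i ^ 2 = 1

/-- `B` is a best rank one approximation of `A` in the Frobenius norm:
`B = s x yᵀ` for unit vectors `x, y`, and `B` minimizes the Frobenius distance to `A`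
among all such matrices. -/
def IsBestRankOne {m : ℕ} (A B : Matrix (Fin m) (Fin m) ℝ) : Prop :=
  (∃ (s : ℝ) (x y : Fin m → ℝ), uvec x ∧ uvec y ∧ B = s • Matrix.vecMulVec x y) ∧
  ∀ (s : ℝ) (x y : Fin m → ℝ), uvec x → uvec y →
    frob (A - B) ≤ frob (A - s • Matrix.vecMulVec x y)

open Matrix RealInnerProductSpace

def ecast {m : ℕ} (x : Fin m → ℝ) : EuclideanSpace ℝ (Fin m) := (WithLp.equiv 2 _).symm x

lemma inner_ecast {m : ℕ} (x y : Fin m → ℝ) : ⟪ecast x, ecast y⟫ = ∑ i, x i * y i := by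
  simp [ecast, PiLp.inner_apply, RCLike.inner_apply, mul_comm]

lemma parseval {m : ℕ} (b : OrthonormalBasis (Fin m) ℝ (EuclideanSpace ℝ (Fin m)))
    (x : Fin m → ℝ) : ∑ i, ⟪b i, ecast x⟫ ^ 2 = ∑ i, x i ^ 2 := by
  have h := b.repr.inner_map_map (ecast x) (ecast x)
  simp only [PiLp.inner_apply, RCLike.inner_apply, conj_trivial] at h
  calc ∑ i, ⟪b i, ecast x⟫ ^ 2 = ∑ i, b.repr (ecast x) i * b.repr (ecast x) i := by
        simp [b.repr_apply_apply, sq]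
    _ = ∑ i, x i ^ 2 := by rw [h]; simp [ecast, sq]

lemma coe_sum_smul {m : ℕ} (b : OrthonormalBasis (Fin m) ℝ (EuclideanSpace ℝ (Fin m)))
    (c : Fin m → ℝ) (j : Fin m) : (∑ i, c i • b i) j = ∑ i, c i * b i j := by
  induction (Finset.univ : Finset (Fin m)) using Finset.induction with
  | empty => simp
  | insert _ _ h ih => rw [Finset.sum_insert h, Finset.sum_insert h, ← ih]; rfl

lemma expand_fun {m : ℕ} (b : OrthonormalBasis (Fin m) ℝ (EuclideanSpace ℝ (Fin m)))
    (x : Fin m → ℝ) (j : Fin m) : x j = ∑ i, ⟪b i, ecast x⟫ * b i j := by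
  rw [← coe_sum_smul]
  have := b.sum_repr' (ecast x)
  simp_rw [this]
  rfl

lemma dot_eigen {n : ℕ} {A : Matrix (Fin (n+1)) (Fin (n+1)) ℝ} (hA : A.IsHermitian)
    (x y : Fin (n+1) → ℝ) :
    x ⬝ᵥ A *ᵥ y = ∑ i, hA.eigenvalues i *
      (⟪hA.eigenvectorBasis i, ecast x⟫ * ⟪hA.eigenvectorBasis i, ecast y⟫) := by
  set b := hA.eigenvectorBasis
  have hy : A *ᵥ y = fun j => ∑ i, ⟪b i, ecast y⟫ * (hA.eigenvalues i * b i j) := by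
    have h1 : y = fun j => ∑ i, ⟪b i, ecast y⟫ * b i j := funext fun j => expand_fun b y j
    conv_lhs => rw [h1]
    funext j
    rw [show (fun j => ∑ i, ⟪b i, ecast y⟫ * b i j) = ∑ i, ⟪b i, ecast y⟫ • (⇑(b i) : Fin (n+1) → ℝ) by
      funext k; simp [Finset.sum_apply]]
    rw [← Matrix.mulVecLin_apply, map_sum]
    simp only [_root_.map_smul, Matrix.mulVecLin_apply]
    simp only [Finset.sum_apply, Pi.smul_apply, smul_eq_mul]
    congr 1; funext i
    have hb := hA.mulVec_eigenvectorBasis i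
    have : A *ᵥ (b i).ofLp = hA.eigenvalues i • (b i).ofLp := hb
    rw [this]
    simp [mul_comm, mul_left_comm]
  rw [hy]
  simp only [dotProduct]
  simp_rw [Finset.mul_sum]
  rw [Finset.sum_comm]
  congr 1; funext i
  rw [show ∑ j, x j * (⟪b i, ecast y⟫ * (hA.eigenvalues i * b i j))
      = hA.eigenvalues i * (⟪b i, ecast y⟫ * ∑ j, b i j * x j) by
    rw [Finset.mul_sum, Finset.mul_sum]; congr 1; funext j; ring]
  have : ∑ j, b i j * x j = ⟪b i, ecast x⟫ := by
    rw [← inner_ecast]; rfl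
  rw [this]; ring

lemma frob_sq_expand {m : ℕ} (A : Matrix (Fin m) (Fin m) ℝ) (s : ℝ) (x y : Fin m → ℝ)
    (hx : uvec x) (hy : uvec y) :
    ∑ i, ∑ j, (A - s • Matrix.vecMulVec x y) i j ^ 2
      = (∑ i, ∑ j, A i j ^ 2) - 2 * s * (x ⬝ᵥ A *ᵥ y) + s ^ 2 := by
  have h : ∀ i j, (A - s • Matrix.vecMulVec x y) i j ^ 2
      = A i j ^ 2 - 2 * s * (x i * (A i j * y j)) + s ^ 2 * (x i ^ 2 * y j ^ 2) := by
    intro i j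
    simp only [Matrix.sub_apply, Matrix.smul_apply, Matrix.vecMulVec_apply, smul_eq_mul]
    ring
  simp_rw [h, Finset.sum_add_distrib, Finset.sum_sub_distrib, ← Finset.mul_sum, ← Finset.sum_mul]
  have h1 : (∑ i, x i * ∑ j, A i j * y j) = x ⬝ᵥ A *ᵥ y := by
    simp [dotProduct, Matrix.mulVec]
  rw [h1, hx, hy]; ring

-- coefficients of eigen-expansion
section ctx

variable {n : ℕ} {A : Matrix (Fin (n+1)) (Fin (n+1)) ℝ} (hA : A.IsHermitian)

/-- coefficient of `x` w.r.t. the eigenbasis -/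
def ev (hA : A.IsHermitian) (x : Fin (n+1) → ℝ) (i : Fin (n+1)) : ℝ :=
  ⟪hA.eigenvectorBasis i, ecast x⟫

lemma dot_eigen' (x y : Fin (n+1) → ℝ) :
    x ⬝ᵥ A *ᵥ y = ∑ i, hA.eigenvalues i * (ev hA x i * ev hA y i) := dot_eigen hA x y

lemma ev_sum_sq (x : Fin (n+1) → ℝ) (hx : uvec x) : ∑ i, ev hA x i ^ 2 = 1 := by
  rw [show (∑ i, ev hA x i ^ 2) = ∑ i, ⟪hA.eigenvectorBasis i, ecast x⟫ ^ 2 from rfl,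
    parseval]
  exact hx

lemma uvec_basis (i : Fin (n+1)) : uvec (⇑(hA.eigenvectorBasis i) : Fin (n+1) → ℝ) := by
  have h := orthonormal_iff_ite.mp hA.eigenvectorBasis.orthonormal i i
  simp only [if_pos rfl] at h
  have h2 : ⟪ecast (⇑(hA.eigenvectorBasis i)), ecast (⇑(hA.eigenvectorBasis i))⟫
      = ∑ j, (hA.eigenvectorBasis i) j * (hA.eigenvectorBasis i) j := inner_ecast _ _
  have h3 : ecast (⇑(hA.eigenvectorBasis i)) = hA.eigenvectorBasis i := rfl
  rw [h3, h] at h2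
  unfold uvec
  simp_rw [sq]
  exact h2.symm

lemma ev_basis (i k : Fin (n+1)) :
    ev hA (⇑(hA.eigenvectorBasis i)) k = if k = i then 1 else 0 := by
  have h3 : ecast (⇑(hA.eigenvectorBasis i)) = hA.eigenvectorBasis i := rfl
  unfold ev
  rw [h3]
  exact orthonormal_iff_ite.mp hA.eigenvectorBasis.orthonormal k i

end ctx
-- σ and bounds
section sigma

variable {n : ℕ} {A : Matrix (Fin (n+1)) (Fin (n+1)) ℝ} (hA : A.IsHermitian)

lemma cs_bound (lam a c : Fin (n+1) → ℝ) (σ : ℝ) (hσ : ∀ i, |lam i| ≤ σ)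
    (ha : ∑ i, a i ^ 2 = 1) (hc : ∑ i, c i ^ 2 = 1) :
    |∑ i, lam i * (a i * c i)| ≤ σ := by
  have hσ0 : 0 ≤ σ := le_trans (abs_nonneg _) (hσ ⟨0, Nat.succ_pos n⟩)
  have h1 : |∑ i, lam i * (a i * c i)| ≤ ∑ i, |a i| * |c i| * σ := by
    refine le_trans (Finset.abs_sum_le_sum_abs _ _) (Finset.sum_le_sum fun i _ => ?_)
    rw [abs_mul, abs_mul]
    calc |lam i| * (|a i| * |c i|) ≤ σ * (|a i| * |c i|) := by
          apply mul_le_mul_of_nonneg_right (hσ i) (by positivity)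
      _ = |a i| * |c i| * σ := by ring
  have h2 : (∑ i, |a i| * |c i|) ^ 2 ≤ 1 := by
    calc (∑ i, |a i| * |c i|) ^ 2 ≤ (∑ i, |a i| ^ 2) * ∑ i, |c i| ^ 2 :=
          Finset.sum_mul_sq_le_sq_mul_sq _ _ _
      _ = 1 := by simp_rw [sq_abs]; rw [ha, hc]; ring
  have h3 : (∑ i, |a i| * |c i|) ≤ 1 := by nlinarith [Finset.sum_nonneg (s := (Finset.univ : Finset (Fin (n+1)))) (f := fun i => |a i| * |c i|) fun i _ => by positivity]
  calc |∑ i, lam i * (a i * c i)| ≤ ∑ i, |a i| * |c i| * σ := h1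
    _ = (∑ i, |a i| * |c i|) * σ := by rw [Finset.sum_mul]
    _ ≤ 1 * σ := mul_le_mul_of_nonneg_right h3 hσ0
    _ = σ := one_mul σ

lemma eq_case (lam a c : Fin (n+1) → ℝ) (σ t : ℝ) (hσ : ∀ i, |lam i| ≤ σ)
    (ha : ∑ i, a i ^ 2 = 1) (hc : ∑ i, c i ^ 2 = 1)
    (ht : t = ∑ i, lam i * (a i * c i)) (ht2 : t ^ 2 = σ ^ 2) :
    ∀ i, t * a i = lam i * c i := by
  have key : ∑ i, (t * a i - lam i * c i) ^ 2 = 0 := by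
    have hexp : ∑ i, (t * a i - lam i * c i) ^ 2
        = t ^ 2 * (∑ i, a i ^ 2) - 2 * t * (∑ i, lam i * (a i * c i))
          + ∑ i, lam i ^ 2 * c i ^ 2 := by
      rw [Finset.mul_sum, Finset.mul_sum, ← Finset.sum_sub_distrib]
      rw [← Finset.sum_add_distrib]
      congr 1; funext i; ring
    have hle : ∑ i, lam i ^ 2 * c i ^ 2 ≤ σ ^ 2 := by
      calc ∑ i, lam i ^ 2 * c i ^ 2 ≤ ∑ i, σ ^ 2 * c i ^ 2 := by
            refine Finset.sum_le_sum fun i _ => ?_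
            have := hσ i
            have h4 : lam i ^ 2 ≤ σ ^ 2 := by nlinarith [abs_nonneg (lam i), sq_abs (lam i)]
            nlinarith [sq_nonneg (c i)]
        _ = σ ^ 2 := by rw [← Finset.mul_sum, hc, mul_one]
    have : ∑ i, (t * a i - lam i * c i) ^ 2 ≤ 0 := by
      rw [hexp, ha, ← ht]; nlinarith
    have h0 : 0 ≤ ∑ i, (t * a i - lam i * c i) ^ 2 :=
      Finset.sum_nonneg fun i _ => sq_nonneg _
    linarith
  intro i
  have := (Finset.sum_eq_zero_iff_of_nonneg (fun i _ => sq_nonneg (t * a i - lam i * c i))).mp key i (Finset.mem_univ i)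
  have h5 : t * a i - lam i * c i = 0 := by
    nlinarith [sq_nonneg (t * a i - lam i * c i)]
  linarith

end sigma
section best

variable {n : ℕ} {A : Matrix (Fin (n+1)) (Fin (n+1)) ℝ} (hA : A.IsHermitian)

lemma sigma_pos (hA0 : A ≠ 0) {i0 : Fin (n+1)}
    (hi0 : ∀ i, |hA.eigenvalues i| ≤ |hA.eigenvalues i0|) : 0 < |hA.eigenvalues i0| := by
  rcases (abs_nonneg (hA.eigenvalues i0)).lt_or_eq with h | h
  · exact h
  · exfalso
    apply hA0
    have hall : hA.eigenvalues = 0 := by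
      funext i
      have := hi0 i
      rw [← h] at this
      simpa using le_antisymm this (abs_nonneg _)
    have := hA.spectral_theorem
    rw [hall] at this
    have hD : Matrix.diagonal (RCLike.ofReal ∘ (0 : Fin (n+1) → ℝ)) = (0 : Matrix (Fin (n+1)) (Fin (n+1)) ℝ) := by
      ext i j; simp [Matrix.diagonal_apply]
    rw [hD] at this
    simpa using this

lemma abs_dot_le {i0 : Fin (n+1)} (hi0 : ∀ i, |hA.eigenvalues i| ≤ |hA.eigenvalues i0|)
    (x y : Fin (n+1) → ℝ) (hx : uvec x) (hy : uvec y) :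
    |x ⬝ᵥ A *ᵥ y| ≤ |hA.eigenvalues i0| := by
  rw [dot_eigen' hA]
  exact cs_bound _ _ _ _ hi0 (ev_sum_sq hA x hx) (ev_sum_sq hA y hy)

lemma dot_basis_self (i : Fin (n+1)) :
    (⇑(hA.eigenvectorBasis i) : Fin (n+1) → ℝ) ⬝ᵥ A *ᵥ ⇑(hA.eigenvectorBasis i)
      = hA.eigenvalues i := by
  rw [dot_eigen' hA]
  simp [ev_basis, mul_ite, Finset.sum_ite_eq']

lemma best_spec {B : Matrix (Fin (n+1)) (Fin (n+1)) ℝ} (hb : IsBestRankOne A B)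
    {i0 : Fin (n+1)} (hi0 : ∀ i, |hA.eigenvalues i| ≤ |hA.eigenvalues i0|) :
    ∃ x y, uvec x ∧ uvec y ∧ (x ⬝ᵥ A *ᵥ y) ^ 2 = (hA.eigenvalues i0) ^ 2 ∧
      B = (x ⬝ᵥ A *ᵥ y) • Matrix.vecMulVec x y := by
  obtain ⟨⟨s, x, y, hx, hy, rfl⟩, hmin⟩ := hb
  set f := x ⬝ᵥ A *ᵥ y with hf
  set σ := hA.eigenvalues i0 with hσ
  have hcand := hmin σ (⇑(hA.eigenvectorBasis i0)) (⇑(hA.eigenvectorBasis i0))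
    (uvec_basis hA i0) (uvec_basis hA i0)
  unfold frob at hcand
  rw [Real.sqrt_le_sqrt_iff (by positivity)] at hcand
  rw [frob_sq_expand A s x y hx hy,
    frob_sq_expand A σ _ _ (uvec_basis hA i0) (uvec_basis hA i0), dot_basis_self hA i0] at hcand
  have hb2 : f ^ 2 ≤ σ ^ 2 := by
    have := abs_dot_le hA hi0 x y hx hy
    nlinarith [abs_nonneg f, sq_abs f, sq_abs σ]
  have hsf : s = f ∧ f ^ 2 = σ ^ 2 := by constructor <;> nlinarith [sq_nonneg (s - f)]
  exact ⟨x, y, hx, hy, hsf.2, by rw [hsf.1]⟩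

end best
section main

variable {n : ℕ} {A : Matrix (Fin (n+1)) (Fin (n+1)) ℝ} (hA : A.IsHermitian)

lemma exists_nonzero_ev (y : Fin (n+1) → ℝ) (hy : uvec y) : ∃ i, ev hA y i ≠ 0 := by
  by_contra h
  push_neg at h
  have := ev_sum_sq hA y hy
  rw [Finset.sum_eq_zero (fun i _ => by rw [h i]; ring)] at this
  norm_num at this

/-- backward direction -/
lemma backward {i0 : Fin (n+1)} (hi0 : ∀ i, |hA.eigenvalues i| ≤ |hA.eigenvalues i0|)
    (hA0 : A ≠ 0)
    (hone : ∀ i j, hA.eigenvalues i ^ 2 = hA.eigenvalues i0 ^ 2 →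
      hA.eigenvalues j ^ 2 = hA.eigenvalues i0 ^ 2 → hA.eigenvalues i = hA.eigenvalues j)
    (B : Matrix (Fin (n+1)) (Fin (n+1)) ℝ) (hB : IsBestRankOne A B) : B.IsSymm := by
  set lam := hA.eigenvalues with hlam
  obtain ⟨x, y, hx, hy, hf2, hBeq⟩ := best_spec hA hB hi0
  set f := x ⬝ᵥ A *ᵥ y with hfdef
  have hσpos := sigma_pos hA hA0 hi0
  have hfne : f ≠ 0 := by
    intro h
    rw [h] at hf2
    nlinarith [hσpos, sq_abs (hA.eigenvalues i0)]
  have hf2' : f ^ 2 = |lam i0| ^ 2 := by rw [sq_abs]; exact hf2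
  have h1 : ∀ i, f * ev hA x i = lam i * ev hA y i :=
    eq_case lam (ev hA x) (ev hA y) |lam i0| f hi0 (ev_sum_sq hA x hx) (ev_sum_sq hA y hy)
      (dot_eigen' hA x y) hf2'
  have h2 : ∀ i, f * ev hA y i = lam i * ev hA x i := by
    refine eq_case lam (ev hA y) (ev hA x) |lam i0| f hi0 (ev_sum_sq hA y hy) (ev_sum_sq hA x hx)
      ?_ hf2'
    rw [hfdef, dot_eigen' hA]
    congr 1; funext i; ring
  have hlsq : ∀ i, ev hA y i ≠ 0 → lam i ^ 2 = lam i0 ^ 2 := by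
    intro i hi
    have e1 := h1 i
    have e2 := h2 i
    have key : f ^ 2 * ev hA y i = lam i ^ 2 * ev hA y i := by
      calc f ^ 2 * ev hA y i = f * (f * ev hA y i) := by ring
        _ = f * (lam i * ev hA x i) := by rw [e2]
        _ = lam i * (f * ev hA x i) := by ring
        _ = lam i * (lam i * ev hA y i) := by rw [e1]
        _ = lam i ^ 2 * ev hA y i := by ring
    have := mul_right_cancel₀ hi key
    rw [← this]; exact hf2
  obtain ⟨i1, hi1⟩ := exists_nonzero_ev hA y hy
  set k := lam i1 / f with hk
  have hall : ∀ i, ev hA x i = k * ev hA y i := by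
    intro i
    by_cases hi : ev hA y i = 0
    · have := h1 i
      rw [hi, mul_zero] at this
      have hx0 : ev hA x i = 0 := by
        rcases mul_eq_zero.mp this with h | h
        · exact absurd h hfne
        · exact h
      rw [hx0, hi, mul_zero]
    · have hlameq : lam i = lam i1 := hone i i1 (hlsq i hi) (hlsq i1 hi1)
      have := h1 i
      rw [hlameq] at this
      rw [hk, div_mul_eq_mul_div, eq_div_iff hfne]
      linear_combination this
  have hxy : ∀ j, x j = k * y j := by
    intro j
    rw [expand_fun hA.eigenvectorBasis x j, expand_fun hA.eigenvectorBasis y j]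
    rw [show (∑ i, ⟪hA.eigenvectorBasis i, ecast x⟫ * hA.eigenvectorBasis i j)
        = ∑ i, ev hA x i * hA.eigenvectorBasis i j from rfl]
    rw [show (∑ i, ⟪hA.eigenvectorBasis i, ecast y⟫ * hA.eigenvectorBasis i j)
        = ∑ i, ev hA y i * hA.eigenvectorBasis i j from rfl]
    rw [Finset.mul_sum]
    congr 1; funext i
    rw [hall i]; ring
  rw [hBeq]
  unfold Matrix.IsSymm
  ext p q
  simp only [Matrix.transpose_apply, Matrix.smul_apply, Matrix.vecMulVec_apply, smul_eq_mul]
  rw [hxy p, hxy q]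
  ring

end main
section fwd

variable {n : ℕ} {A : Matrix (Fin (n+1)) (Fin (n+1)) ℝ} (hA : A.IsHermitian)

lemma forward_bad {i0 imax imin : Fin (n+1)}
    (hi0 : ∀ i, |hA.eigenvalues i| ≤ |hA.eigenvalues i0|) (hA0 : A ≠ 0)
    (hmax : hA.eigenvalues imax = |hA.eigenvalues i0|)
    (hmin : hA.eigenvalues imin = -|hA.eigenvalues i0|) :
    ∃ B, IsBestRankOne A B ∧ ¬ B.IsSymm := by
  set lam := hA.eigenvalues with hlam
  set b := hA.eigenvectorBasis with hb
  set σ := |lam i0| with hσ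
  have hσpos : 0 < σ := sigma_pos hA hA0 hi0
  have hdiff : imax ≠ imin := by
    intro h
    rw [h, hmin] at hmax
    linarith
  set c : ℝ := (Real.sqrt 2)⁻¹ with hc
  have hs2 : Real.sqrt 2 ^ 2 = 2 := Real.sq_sqrt (by norm_num)
  have hs2ne : Real.sqrt 2 ≠ 0 := by positivity
  have hcc : c * c = 1/2 := by
    rw [hc, ← mul_inv, Real.mul_self_sqrt (by norm_num : (0:ℝ) ≤ 2)]
    norm_num
  have hcne : c ≠ 0 := by
    rw [hc]; positivity
  set u : Fin (n+1) → ℝ := ⇑(b imax) with hu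
  set v : Fin (n+1) → ℝ := ⇑(b imin) with hv
  set x : Fin (n+1) → ℝ := fun j => c * (u j + v j) with hx
  set y : Fin (n+1) → ℝ := fun j => c * (u j - v j) with hy
  have husq : ∑ j, u j ^ 2 = 1 := uvec_basis hA imax
  have hvsq : ∑ j, v j ^ 2 = 1 := uvec_basis hA imin
  have huv : ∑ j, u j * v j = 0 := by
    have h := orthonormal_iff_ite.mp hA.eigenvectorBasis.orthonormal imax imin
    rw [if_neg hdiff] at h
    have h2 : ⟪ecast u, ecast v⟫ = ∑ j, u j * v j := inner_ecast u v
    have h3 : ecast u = b imax := rfl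
    have h4 : ecast v = b imin := rfl
    rw [h3, h4, h] at h2
    exact h2.symm
  have hsum_pm : ∀ (e : ℝ), (∑ j, (c * (u j + e * v j)) ^ 2) = (1/2) * (1 + 2*e*0 + e^2) := by
    intro e
    have h : ∀ j, (c * (u j + e * v j)) ^ 2
        = (c*c) * (u j ^2 + 2*e*(u j * v j) + e^2 * v j ^2) := by intro j; ring
    simp_rw [h, hcc]
    rw [← Finset.mul_sum, Finset.sum_add_distrib, Finset.sum_add_distrib, ← Finset.mul_sum,
      ← Finset.mul_sum, husq, hvsq, huv]
    ring
  have hux : uvec x := by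
    unfold uvec
    calc ∑ j, x j ^ 2 = ∑ j, (c * (u j + 1 * v j)) ^ 2 :=
          Finset.sum_congr rfl fun j _ => by rw [hx]; ring
      _ = 1 := by rw [hsum_pm 1]; norm_num
  have huy : uvec y := by
    unfold uvec
    calc ∑ j, y j ^ 2 = ∑ j, (c * (u j + (-1) * v j)) ^ 2 :=
          Finset.sum_congr rfl fun j _ => by rw [hy]; ring
      _ = 1 := by rw [hsum_pm (-1)]; norm_num
  have hinner : ∀ (k l : Fin (n+1)), (∑ j, (b k) j * (b l) j) = if k = l then 1 else 0 := by
    intro k l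
    have h2 : ⟪ecast (⇑(b k)), ecast (⇑(b l))⟫ = ∑ j, b k j * b l j := inner_ecast _ _
    have h3 : ecast (⇑(b k)) = b k := rfl
    have h4 : ecast (⇑(b l)) = b l := rfl
    rw [h3, h4, orthonormal_iff_ite.mp hA.eigenvectorBasis.orthonormal k l] at h2
    exact h2.symm
  have hevgen : ∀ (w : Fin (n+1) → ℝ) (k : Fin (n+1)), ev hA w k = ∑ j, b k j * w j := by
    intro w k
    rw [show ev hA w k = ⟪ecast (⇑(b k)), ecast w⟫ from rfl, inner_ecast]
  have hinu : ∀ k, (∑ j, b k j * u j) = if k = imax then 1 else 0 := fun k => hinner k imax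
  have hinv : ∀ k, (∑ j, b k j * v j) = if k = imin then 1 else 0 := fun k => hinner k imin
  have hevx : ∀ k, ev hA x k = c * ((if k = imax then 1 else 0) + (if k = imin then 1 else 0)) := by
    intro k
    rw [hevgen x k]
    calc ∑ j, b k j * x j = ∑ j, (c * (b k j * u j) + c * (b k j * v j)) :=
          Finset.sum_congr rfl fun j _ => by rw [hx]; ring
      _ = c * ((∑ j, b k j * u j) + ∑ j, b k j * v j) := by
          rw [Finset.sum_add_distrib, ← Finset.mul_sum, ← Finset.mul_sum, mul_add]
      _ = _ := by rw [hinu k, hinv k]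
  have hevy : ∀ k, ev hA y k = c * ((if k = imax then 1 else 0) - (if k = imin then 1 else 0)) := by
    intro k
    rw [hevgen y k]
    calc ∑ j, b k j * y j = ∑ j, (c * (b k j * u j) - c * (b k j * v j)) :=
          Finset.sum_congr rfl fun j _ => by rw [hy]; ring
      _ = c * ((∑ j, b k j * u j) - ∑ j, b k j * v j) := by
          rw [Finset.sum_sub_distrib, ← Finset.mul_sum, ← Finset.mul_sum, mul_sub]
      _ = _ := by rw [hinu k, hinv k]
  have hfval : x ⬝ᵥ A *ᵥ y = σ := by
    rw [dot_eigen' hA]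
    have hterm : ∀ k, hA.eigenvalues k * (ev hA x k * ev hA y k)
        = (if k = imax then σ/2 else 0) + (if k = imin then σ/2 else 0) := by
      intro k
      rw [hevx k, hevy k]
      by_cases h1 : k = imax
      · have h2 : ¬ (k = imin) := fun h => hdiff (h1.symm.trans h)
        subst h1
        simp only [if_neg h2, eq_self_iff_true, if_true, add_zero, zero_add, sub_zero]
        rw [show (hA.eigenvalues k : ℝ) = σ from hmax]
        linear_combination (σ) * hcc
      · by_cases h2 : k = imin
        · subst h2
          simp only [if_neg h1, eq_self_iff_true, if_true, add_zero, zero_add, zero_sub]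
          rw [show (hA.eigenvalues k : ℝ) = -σ from hmin]
          linear_combination (σ) * hcc
        · simp [h1, h2]
    rw [Finset.sum_congr rfl fun k _ => hterm k, Finset.sum_add_distrib]
    simp [Finset.sum_ite_eq']
  refine ⟨σ • Matrix.vecMulVec x y, ⟨⟨σ, x, y, hux, huy, rfl⟩, ?_⟩, ?_⟩
  · intro s x' y' hx' hy'
    unfold frob
    apply Real.sqrt_le_sqrt
    rw [frob_sq_expand A σ x y hux huy, frob_sq_expand A s x' y' hx' hy', hfval]
    have hble := abs_dot_le hA hi0 x' y' hx' hy'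
    nlinarith [sq_nonneg (s - x' ⬝ᵥ A *ᵥ y'), sq_abs (x' ⬝ᵥ A *ᵥ y'),
      abs_nonneg (x' ⬝ᵥ A *ᵥ y'), hσpos]
  · intro hsym
    have hBpq : ∀ p q, x q * y p = x p * y q := by
      intro p q
      have h6 := congrFun (congrFun hsym p) q
      simp only [Matrix.transpose_apply, Matrix.smul_apply, Matrix.vecMulVec_apply,
        smul_eq_mul] at h6
      have := mul_left_cancel₀ (ne_of_gt hσpos) h6
      linarith [this]
    obtain ⟨p, hp⟩ : ∃ p, x p ≠ 0 := by
      by_contra h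
      push_neg at h
      have := hux
      unfold uvec at this
      rw [Finset.sum_eq_zero (fun j _ => by rw [h j]; ring)] at this
      norm_num at this
    set k' := y p / x p with hk'
    have hyq : ∀ q, y q = k' * x q := by
      intro q
      have h7 := hBpq p q
      rw [hk', div_mul_eq_mul_div, eq_div_iff hp]
      linear_combination -h7
    have hevk : ∀ i, ev hA y i = k' * ev hA x i := by
      intro i
      rw [hevgen y i, hevgen x i, Finset.mul_sum]
      exact Finset.sum_congr rfl fun j _ => by rw [hyq j]; ring
    have e1 := hevk imax
    have e2 := hevk imin
    rw [hevx imax, hevy imax] at e1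
    rw [hevx imin, hevy imin] at e2
    simp only [if_pos rfl, if_true, if_neg hdiff, if_neg (Ne.symm hdiff), add_zero, zero_add,
      sub_zero, zero_sub, mul_one, mul_neg_one, mul_neg] at e1 e2
    have hcontra : c = 0 := by linarith [e1, e2]
    exact hcne hcontra

end fwd

/-- For a nonzero real symmetric matrix `A`, every best rank one approximation of `A`
is symmetric if and only if `λ₁(A) ≠ -λₙ(A)`. -/
theorem stmt2 {n : ℕ} (A : Matrix (Fin (n + 1)) (Fin (n + 1)) ℝ) (hA : A.IsHermitian)
    (hA0 : A ≠ 0) :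
    (∀ B, IsBestRankOne A B → B.IsSymm) ↔
      (⨆ i, hA.eigenvalues i) ≠ -(⨅ i, hA.eigenvalues i) := by
  obtain ⟨i0, hi0⟩ := Finite.exists_max fun i => |hA.eigenvalues i|
  obtain ⟨imax, himax⟩ := Finite.exists_max hA.eigenvalues
  obtain ⟨imin, himin⟩ := Finite.exists_min hA.eigenvalues
  have hσpos : 0 < |hA.eigenvalues i0| := sigma_pos hA hA0 hi0
  have hsup : (⨆ i, hA.eigenvalues i) = hA.eigenvalues imax :=
    le_antisymm (ciSup_le himax) (le_ciSup (Set.Finite.bddAbove (Set.finite_range _)) imax)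
  have hinf : (⨅ i, hA.eigenvalues i) = hA.eigenvalues imin :=
    le_antisymm (ciInf_le (Set.Finite.bddBelow (Set.finite_range _)) imin) (le_ciInf himin)
  rw [hsup, hinf]
  have hmaxle : hA.eigenvalues imax ≤ |hA.eigenvalues i0| :=
    le_trans (le_abs_self _) (hi0 imax)
  have hminge : -|hA.eigenvalues i0| ≤ hA.eigenvalues imin := by
    have := neg_abs_le (hA.eigenvalues imin)
    have := hi0 imin
    linarith
  constructor
  · intro hall heq
    have h1 : hA.eigenvalues imax = |hA.eigenvalues i0| := by
      rcases abs_cases (hA.eigenvalues i0) with ⟨h, _⟩ | ⟨h, _⟩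
      · linarith [himax i0]
      · linarith [himin i0]
    have h2 : hA.eigenvalues imin = -|hA.eigenvalues i0| := by linarith
    obtain ⟨B, hB, hBs⟩ := forward_bad hA hi0 hA0 h1 h2
    exact hBs (hall B hB)
  · intro hne
    have hone : ∀ i j, hA.eigenvalues i ^ 2 = hA.eigenvalues i0 ^ 2 →
        hA.eigenvalues j ^ 2 = hA.eigenvalues i0 ^ 2 → hA.eigenvalues i = hA.eigenvalues j := by
      intro i j hi hj
      by_contra hij
      have hsq : ∀ k, hA.eigenvalues k ^ 2 = hA.eigenvalues i0 ^ 2 →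
          hA.eigenvalues k = |hA.eigenvalues i0| ∨ hA.eigenvalues k = -|hA.eigenvalues i0| := by
        intro k hk
        have hfac : (hA.eigenvalues k - |hA.eigenvalues i0|) *
            (hA.eigenvalues k + |hA.eigenvalues i0|) = 0 := by
          nlinarith [sq_abs (hA.eigenvalues i0)]
        rcases mul_eq_zero.mp hfac with h | h
        · left; linarith
        · right; linarith
      have hboth : False := by
        rcases hsq i hi with h | h <;> rcases hsq j hj with g | g
        · exact hij (h.trans g.symm)
        · apply hne
          have e1 : hA.eigenvalues imax = |hA.eigenvalues i0| :=
            le_antisymm hmaxle (h ▸ himax i)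
          have e2 : hA.eigenvalues imin = -|hA.eigenvalues i0| :=
            le_antisymm (g ▸ himin j) hminge
          rw [e1, e2]; ring
        · apply hne
          have e1 : hA.eigenvalues imax = |hA.eigenvalues i0| :=
            le_antisymm hmaxle (g ▸ himax j)
          have e2 : hA.eigenvalues imin = -|hA.eigenvalues i0| :=
            le_antisymm (h ▸ himin i) hminge
          rw [e1, e2]; ring
        · exact hij (h.trans g.symm)
      exact hboth
    exact fun B hB => backward hA hi0 hA0 hone B hB
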